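/- The John ellipsoid (the unique maximal-volume inscribed ellipsoid) of the product B_X^n(1) × B_P^n(1) ⊆ ℝ²ⁿ of two unit balls is the unit ball B²ⁿ(1). -/

import Mathlib

open Matrix MeasureTheory

set_option linter.unusedSectionVars false
set_option maxHeartbeats 1000000

section Eig
variable {m : Type*} [Fintype m] [DecidableEq m] {A : Matrix m m ℝ}

lemma my_eig_le_one (hA : A.PosSemidef) (h1 : (1 - A).PosSemidef) (i : m) :
    hA.1.eigenvalues i ≤ 1 := by
  set v : EuclideanSpace ℝ m := hA.1.eigenvectorBasis i with hv
  have hnorm : ‖v‖ = 1 := hA.1.eigenvectorBasis.orthonormal.1 i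
  have hvv : (⇑v) ⬝ᵥ (⇑v) = 1 := by
    have h : (⇑v) ⬝ᵥ (⇑v) = inner (𝕜 := ℝ) v v := by
      rw [EuclideanSpace.inner_eq_star_dotProduct, star_trivial]
    rw [h, real_inner_self_eq_norm_sq, hnorm]; norm_num
  have h2 := h1.dotProduct_mulVec_nonneg (⇑v)
  have heq : hA.1.eigenvalues i = (⇑v) ⬝ᵥ (A *ᵥ ⇑v) := by
    have := hA.1.eigenvalues_eq i
    simpa using this
  rw [sub_mulVec, dotProduct_sub, one_mulVec] at h2
  simp only [star_trivial] at h2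
  rw [hvv, ← heq] at h2
  linarith

lemma my_det_nonneg (hA : A.PosSemidef) : 0 ≤ A.det := by
  have h := hA.1.det_eq_prod_eigenvalues
  simp only [RCLike.ofReal_real_eq_id, id] at h
  rw [h]
  exact Finset.prod_nonneg fun i _ => hA.eigenvalues_nonneg i

lemma my_det_le_one (hA : A.PosSemidef) (h1 : (1 - A).PosSemidef) : A.det ≤ 1 := by
  have h := hA.1.det_eq_prod_eigenvalues
  simp only [RCLike.ofReal_real_eq_id, id] at h
  rw [h]
  exact Finset.prod_le_one (fun i _ => hA.eigenvalues_nonneg i) (fun i _ => my_eig_le_one hA h1 i)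

lemma my_eq_one_of_det (hA : A.PosSemidef) (h1 : (1 - A).PosSemidef) (hdet : A.det = 1) :
    A = 1 := by
  have hall : ∀ i, hA.1.eigenvalues i = 1 := by
    by_contra hc
    push_neg at hc
    obtain ⟨j, hj⟩ := hc
    have hjlt : hA.1.eigenvalues j < 1 := lt_of_le_of_ne (my_eig_le_one hA h1 j) hj
    have hprod : (∏ i, hA.1.eigenvalues i) < 1 := by
      rw [← Finset.mul_prod_erase Finset.univ _ (Finset.mem_univ j)]
      calc hA.1.eigenvalues j * ∏ i ∈ Finset.univ.erase j, hA.1.eigenvalues i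
          ≤ hA.1.eigenvalues j * 1 := by
            refine mul_le_mul_of_nonneg_left ?_ (hA.eigenvalues_nonneg j)
            exact Finset.prod_le_one (fun i _ => hA.eigenvalues_nonneg i)
              (fun i _ => my_eig_le_one hA h1 i)
        _ < 1 := by rw [mul_one]; exact hjlt
    have h := hA.1.det_eq_prod_eigenvalues
    simp only [RCLike.ofReal_real_eq_id, id] at h
    rw [hdet] at h
    rw [← h] at hprod
    exact lt_irrefl 1 hprod
  have hst := hA.1.spectral_theorem
  have hfun : (RCLike.ofReal ∘ hA.1.eigenvalues : m → ℝ) = fun _ => (1 : ℝ) := by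
    funext i; simp [hall i]
  rw [hst, hfun]
  simp only [Matrix.diagonal_one, mul_one]
  exact map_one _
end Eig

section Core
variable {k k' : Type*} [Fintype k] [DecidableEq k] [Fintype k'] [DecidableEq k']

lemma my_dotProduct_self_nonneg (v : k → ℝ) : 0 ≤ v ⬝ᵥ v :=
  Finset.sum_nonneg fun _ _ => mul_self_nonneg _

lemma my_sum_elim_dotProduct (u x : k → ℝ) (v y : k' → ℝ) :
    Sum.elim u v ⬝ᵥ Sum.elim x y = u ⬝ᵥ x + v ⬝ᵥ y := by
  simp [dotProduct, Fintype.sum_sum_type]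

lemma my_cauchy (x y : k → ℝ) : (x ⬝ᵥ y) ^ 2 ≤ (x ⬝ᵥ x) * (y ⬝ᵥ y) := by
  have h := Finset.sum_mul_sq_le_sq_mul_sq Finset.univ x y
  simp only [dotProduct, pow_two] at h ⊢
  convert h using 3 <;> rw [pow_two]

lemma my_half (x y : k → ℝ) (hx : x ⬝ᵥ x ≤ 1) (hy : y ⬝ᵥ y ≤ 1) :
    ((2⁻¹ : ℝ) • (x - y)) ⬝ᵥ ((2⁻¹ : ℝ) • (x - y)) ≤ 1 := by
  have h0 := my_dotProduct_self_nonneg (x + y)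
  simp only [smul_dotProduct, dotProduct_smul, sub_dotProduct, dotProduct_sub,
    add_dotProduct, dotProduct_add, smul_eq_mul] at h0 ⊢
  nlinarith

lemma my_center_zero (x : k → ℝ)
    (h : ∀ u : k → ℝ, u ⬝ᵥ u ≤ 1 → (x + u) ⬝ᵥ (x + u) ≤ 1) : x = 0 := by
  by_contra hx
  have hs0 : 0 < x ⬝ᵥ x := by
    rcases (my_dotProduct_self_nonneg x).lt_or_eq with h' | h'
    · exact h'
    · exact absurd (dotProduct_self_eq_zero.mp h'.symm) hx
  set s := x ⬝ᵥ x with hs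
  set t := (Real.sqrt s)⁻¹ with ht
  have hst : 0 < Real.sqrt s := Real.sqrt_pos.mpr hs0
  have ht0 : 0 < t := inv_pos.mpr hst
  have ht2 : t * t * s = 1 := by
    rw [ht]
    rw [show s = Real.sqrt s * Real.sqrt s from (Real.mul_self_sqrt hs0.le).symm]
    field_simp
    rw [Real.sqrt_sq hst.le]
  have hu : (t • x) ⬝ᵥ (t • x) ≤ 1 := by
    rw [smul_dotProduct, dotProduct_smul, smul_eq_mul, smul_eq_mul, ← hs]
    nlinarith
  have hcon := h (t • x) hu
  simp only [dotProduct_add, add_dotProduct, smul_dotProduct, dotProduct_smul,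
    smul_eq_mul] at hcon
  rw [← hs] at hcon
  have hts : 0 < t * s := mul_pos ht0 hs0
  nlinarith [hcon]

lemma my_posdef_mul_transpose (M : Matrix k k ℝ) (h : M.det ≠ 0) : (M * Mᵀ).PosDef := by
  have hherm : (M * Mᵀ).IsHermitian := by
    have := Matrix.isHermitian_mul_conjTranspose_self M
    rwa [Matrix.conjTranspose_eq_transpose_of_trivial] at this
  refine Matrix.PosDef.of_dotProduct_mulVec_pos hherm fun x hx => ?_
  have h1 : star x ⬝ᵥ (M * Mᵀ) *ᵥ x = (Mᵀ *ᵥ x) ⬝ᵥ (Mᵀ *ᵥ x) := by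
    rw [star_trivial, ← Matrix.mulVec_mulVec, Matrix.dotProduct_mulVec, ← Matrix.mulVec_transpose]
  rw [h1]
  have hx2 : Mᵀ *ᵥ x ≠ 0 := by
    intro hc
    have hinj : Function.Injective (Mᵀ).mulVec :=
      Matrix.mulVec_injective_iff_isUnit.2 (by
        rw [Matrix.isUnit_iff_isUnit_det, Matrix.det_transpose]; exact h.isUnit)
    exact hx (hinj (by simpa using hc))
  have := my_dotProduct_self_nonneg (Mᵀ *ᵥ x)
  rcases this.lt_or_eq with h' | h'
  · exact h'
  · exact absurd (dotProduct_self_eq_zero.mp h'.symm) hx2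

lemma my_posdef_toBlocks₁₁ {N : Matrix (k ⊕ k') (k ⊕ k') ℝ} (hN : N.PosDef) :
    N.toBlocks₁₁.PosDef := by
  refine Matrix.PosDef.of_dotProduct_mulVec_pos ?_ fun x hx => ?_
  · have := hN.1
    ext i j
    simpa [Matrix.toBlocks₁₁, Matrix.conjTranspose_apply] using
      congrFun (congrFun this (Sum.inl i)) (Sum.inl j)
  · have hq := hN.dotProduct_mulVec_pos (x := Sum.elim x 0) (by
      intro hc
      exact hx (funext fun i => congrFun hc (Sum.inl i)))
    have heq : star (Sum.elim x 0) ⬝ᵥ N *ᵥ Sum.elim x 0 = star x ⬝ᵥ N.toBlocks₁₁ *ᵥ x := by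
      conv_lhs => rw [← Matrix.fromBlocks_toBlocks N]
      rw [Matrix.fromBlocks_mulVec]
      simp only [star_trivial, Matrix.mulVec_zero, add_zero]
      rw [my_sum_elim_dotProduct]
      simp
    rwa [heq] at hq

/-- The key matrix inequality: if both diagonal blocks of `M * Mᵀ` are bounded by `1` in the
Loewner order, then `det M ^ 2 ≤ 1`, with equality only if `M` is orthogonal. -/
lemma my_core (M : Matrix (k ⊕ k') (k ⊕ k') ℝ) (hdet : M.det ≠ 0)
    (hP : (1 - (M * Mᵀ).toBlocks₁₁).PosSemidef)
    (hR : (1 - (M * Mᵀ).toBlocks₂₂).PosSemidef) :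
    M.det ^ 2 ≤ 1 ∧ (M.det ^ 2 = 1 → Mᵀ * M = 1) := by
  set N := M * Mᵀ with hNdef
  have hN : N.PosDef := my_posdef_mul_transpose M hdet
  set P := N.toBlocks₁₁ with hPdef
  set Q := N.toBlocks₁₂ with hQdef
  set R := N.toBlocks₂₂ with hRdef
  have hQ21 : N.toBlocks₂₁ = Qᴴ := by
    ext i j
    simpa [Matrix.toBlocks₂₁, hQdef, Matrix.toBlocks₁₂, Matrix.conjTranspose_apply] using
      (congrFun (congrFun hN.1 (Sum.inr i)) (Sum.inl j)).symm
  have hNb : N = Matrix.fromBlocks P Q Qᴴ R := by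
    rw [← hQ21]
    exact (Matrix.fromBlocks_toBlocks N).symm
  have hPd : P.PosDef := my_posdef_toBlocks₁₁ hN
  haveI : Invertible P := hPd.isUnit.invertible
  set S := R - Qᴴ * P⁻¹ * Q with hSdef
  have hdetN : N.det = P.det * S.det := by
    rw [hNb, Matrix.det_fromBlocks₁₁, Matrix.invOf_eq_nonsing_inv]
  have hS_psd : S.PosSemidef := by
    rw [hSdef]
    exact (Matrix.PosDef.fromBlocks₁₁ Q R hPd).mp (hNb ▸ hN.posSemidef)
  have hS_le : (1 - S).PosSemidef := by
    have h1 : (1 : Matrix k' k' ℝ) - S = (1 - R) + Qᴴ * P⁻¹ * Q := by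
      rw [hSdef]; abel
    rw [h1]
    exact hR.add ((hPd.inv.posSemidef).conjTranspose_mul_mul_same Q)
  have hdetP_le : P.det ≤ 1 := my_det_le_one hPd.posSemidef hP
  have hdetS_le : S.det ≤ 1 := my_det_le_one hS_psd hS_le
  have hdetP_pos : 0 < P.det := hPd.det_pos
  have hdetS_nonneg : 0 ≤ S.det := my_det_nonneg hS_psd
  have hdetM2 : M.det ^ 2 = N.det := by
    rw [hNdef, Matrix.det_mul, Matrix.det_transpose, sq]
  constructor
  · rw [hdetM2, hdetN]
    calc P.det * S.det ≤ 1 * S.det := mul_le_mul_of_nonneg_right hdetP_le hdetS_nonneg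
      _ ≤ 1 := by rw [one_mul]; exact hdetS_le
  · intro heq
    rw [hdetM2, hdetN] at heq
    have hdP : P.det = 1 := by nlinarith
    have hdS : S.det = 1 := by nlinarith
    have hP1 : P = 1 := my_eq_one_of_det hPd.posSemidef hP hdP
    have hS1 : S = 1 := my_eq_one_of_det hS_psd hS_le hdS
    have hS1' : R - Qᴴ * Q = 1 := by
      have := hS1
      rwa [hSdef, hP1, inv_one, Matrix.mul_one] at this
    have hQQ : Qᴴ * Q = R - 1 := by
      rw [← hS1']; abel
    have hQQpsd : (Qᴴ * Q).PosSemidef := Matrix.posSemidef_conjTranspose_mul_self Q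
    have hQQzero : Qᴴ * Q = 0 := by
      have hneg : ∀ x, star x ⬝ᵥ (Qᴴ * Q) *ᵥ x ≤ 0 := by
        intro x
        have h2 := hR.dotProduct_mulVec_nonneg x
        rw [hQQ, sub_mulVec, dotProduct_sub]
        rw [sub_mulVec, dotProduct_sub] at h2
        linarith
      have hz : ∀ x, star x ⬝ᵥ (Qᴴ * Q) *ᵥ x = 0 :=
        fun x => le_antisymm (hneg x) (hQQpsd.dotProduct_mulVec_nonneg x)
      ext i j
      have hmv : ∀ x, (Qᴴ * Q) *ᵥ x = 0 := by
        intro x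
        exact (hQQpsd.dotProduct_mulVec_zero_iff x).mp (hz x)
      have := congrFun (hmv (Pi.single j 1)) i
      simpa [Matrix.mulVec_single] using this
    have hQ0 : Q = 0 := Matrix.conjTranspose_mul_self_eq_zero.mp hQQzero
    have hR1 : R = 1 := by
      have h0 : R - 1 = 0 := by rw [← hQQ, hQQzero]
      exact sub_eq_zero.mp h0
    have hN1 : N = 1 := by
      rw [hNb, hQ0, hR1, hP1]
      simp [Matrix.fromBlocks_one]
    rw [mul_eq_one_comm.mp (hNdef ▸ hN1)]

end Core

/-- the John ellipsoid (unique maximal-volume inscribed ellipsoid)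
of the product `B_X^n(1) × B_P^n(1)` of two unit balls is the unit ball
`B²ⁿ(1)`.  Ellipsoids are the affine images of the unit Euclidean ball under
invertible linear maps. -/
theorem john_ellipsoid_of_product_of_balls {n : ℕ} :
    -- the unit ball is contained in the product of balls
    {z : (Fin n → ℝ) × (Fin n → ℝ) | z.1 ⬝ᵥ z.1 + z.2 ⬝ᵥ z.2 ≤ 1}
      ⊆ {z | z.1 ⬝ᵥ z.1 ≤ 1 ∧ z.2 ⬝ᵥ z.2 ≤ 1} ∧
    -- and any ellipsoid contained in the product of balls has volume at most
    -- that of the unit ball, with equality only for the unit ball itself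
    ∀ (f : ((Fin n → ℝ) × (Fin n → ℝ)) ≃ₗ[ℝ] ((Fin n → ℝ) × (Fin n → ℝ)))
      (c : (Fin n → ℝ) × (Fin n → ℝ)),
      (fun z => c + f z) '' {z | z.1 ⬝ᵥ z.1 + z.2 ⬝ᵥ z.2 ≤ 1}
          ⊆ {z | z.1 ⬝ᵥ z.1 ≤ 1 ∧ z.2 ⬝ᵥ z.2 ≤ 1} →
        volume ((fun z => c + f z) '' {z | z.1 ⬝ᵥ z.1 + z.2 ⬝ᵥ z.2 ≤ 1})
            ≤ volume {z : (Fin n → ℝ) × (Fin n → ℝ) | z.1 ⬝ᵥ z.1 + z.2 ⬝ᵥ z.2 ≤ 1} ∧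
        (volume ((fun z => c + f z) '' {z | z.1 ⬝ᵥ z.1 + z.2 ⬝ᵥ z.2 ≤ 1})
            = volume {z : (Fin n → ℝ) × (Fin n → ℝ) | z.1 ⬝ᵥ z.1 + z.2 ⬝ᵥ z.2 ≤ 1} →
          (fun z => c + f z) '' {z | z.1 ⬝ᵥ z.1 + z.2 ⬝ᵥ z.2 ≤ 1}
            = {z : (Fin n → ℝ) × (Fin n → ℝ) | z.1 ⬝ᵥ z.1 + z.2 ⬝ᵥ z.2 ≤ 1}) := by
  classical
  constructor
  · intro z hz
    simp only [Set.mem_setOf_eq] at hz ⊢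
    have h1 := my_dotProduct_self_nonneg z.1
    have h2 := my_dotProduct_self_nonneg z.2
    exact ⟨by linarith, by linarith⟩
  intro f c himg
  -- notation
  set Bs : Set ((Fin n → ℝ) × (Fin n → ℝ)) :=
    {z | z.1 ⬝ᵥ z.1 + z.2 ⬝ᵥ z.2 ≤ 1} with hBs
  -- the Haar measure instance on the product space
  haveI : (volume : Measure ((Fin n → ℝ) × (Fin n → ℝ))).IsAddHaarMeasure :=
    Measure.prod.instIsAddHaarMeasure volume volume
  -- the basis and the matrix of f
  set b : Module.Basis (Fin n ⊕ Fin n) ℝ ((Fin n → ℝ) × (Fin n → ℝ)) :=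
    (Pi.basisFun ℝ (Fin n)).prod (Pi.basisFun ℝ (Fin n)) with hb
  set M : Matrix (Fin n ⊕ Fin n) (Fin n ⊕ Fin n) ℝ :=
    LinearMap.toMatrix b b f.toLinearMap with hM
  have hco : ∀ z : (Fin n → ℝ) × (Fin n → ℝ), ⇑(b.repr z) = Sum.elim z.1 z.2 := by
    intro z
    funext j
    cases j with
    | inl i => simp [hb, Module.Basis.prod_repr_inl]
    | inr i => simp [hb, Module.Basis.prod_repr_inr]
  have hMv : ∀ z : (Fin n → ℝ) × (Fin n → ℝ),
      M *ᵥ Sum.elim z.1 z.2 = Sum.elim (f z).1 (f z).2 := by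
    intro z
    rw [← hco z, hM, LinearMap.toMatrix_mulVec_repr, hco]
    rfl
  have hdet0 : M.det ≠ 0 := by
    have h := f.isUnit_det'
    rw [← LinearMap.det_toMatrix b] at h
    exact h.ne_zero
  -- centered inclusion: f maps the unit ball into the product of balls
  have hcent : ∀ z : (Fin n → ℝ) × (Fin n → ℝ), z.1 ⬝ᵥ z.1 + z.2 ⬝ᵥ z.2 ≤ 1 →
      (f z).1 ⬝ᵥ (f z).1 ≤ 1 ∧ (f z).2 ⬝ᵥ (f z).2 ≤ 1 := by
    intro z hz
    have hz' : (-z).1 ⬝ᵥ (-z).1 + (-z).2 ⬝ᵥ (-z).2 ≤ 1 := by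
      simpa [neg_dotProduct, dotProduct_neg] using hz
    have h1 := himg (Set.mem_image_of_mem _ hz)
    have h2 := himg (Set.mem_image_of_mem _ hz')
    simp only [Set.mem_setOf_eq] at h1 h2
    have hfz : f z = (2⁻¹ : ℝ) • ((c + f z) - (c + f (-z))) := by
      rw [map_neg]
      rw [show (c + f z) - (c + (- f z)) = f z + f z by abel]
      rw [smul_add]
      rw [← add_smul]
      norm_num
    constructor
    · have := my_half (c + f z).1 (c + f (-z)).1 h1.1 h2.1
      rw [hfz]
      simpa [Prod.smul_fst, Prod.fst_sub] using this
    · have := my_half (c + f z).2 (c + f (-z)).2 h1.2 h2.2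
      rw [hfz]
      simpa [Prod.smul_snd, Prod.snd_sub] using this
  -- scaled version
  have hscale : ∀ z : (Fin n → ℝ) × (Fin n → ℝ),
      (f z).1 ⬝ᵥ (f z).1 ≤ z.1 ⬝ᵥ z.1 + z.2 ⬝ᵥ z.2 ∧
      (f z).2 ⬝ᵥ (f z).2 ≤ z.1 ⬝ᵥ z.1 + z.2 ⬝ᵥ z.2 := by
    intro z
    have h1 := my_dotProduct_self_nonneg z.1
    have h2 := my_dotProduct_self_nonneg z.2
    rcases (add_nonneg h1 h2).lt_or_eq with hpos | hzero
    · set s := z.1 ⬝ᵥ z.1 + z.2 ⬝ᵥ z.2 with hs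
      set t := (Real.sqrt s)⁻¹ with ht
      have hst : 0 < Real.sqrt s := Real.sqrt_pos.mpr hpos
      have ht0 : 0 < t := inv_pos.mpr hst
      have ht2 : t * t * s = 1 := by
        rw [ht, show s = Real.sqrt s * Real.sqrt s from (Real.mul_self_sqrt hpos.le).symm]
        field_simp
        rw [Real.sqrt_sq hst.le]
      have hmem : (t • z).1 ⬝ᵥ (t • z).1 + (t • z).2 ⬝ᵥ (t • z).2 ≤ 1 := by
        simp only [Prod.smul_fst, Prod.smul_snd, smul_dotProduct, dotProduct_smul, smul_eq_mul]
        nlinarith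
      have hw := hcent (t • z) hmem
      rw [LinearEquiv.map_smul] at hw
      simp only [Prod.smul_fst, Prod.smul_snd, smul_dotProduct, dotProduct_smul,
        smul_eq_mul] at hw
      obtain ⟨hw1, hw2⟩ := hw
      constructor
      · nlinarith [my_dotProduct_self_nonneg (f z).1]
      · nlinarith [my_dotProduct_self_nonneg (f z).2]
    · have hz1 : z.1 ⬝ᵥ z.1 = 0 := by linarith
      have hz2 : z.2 ⬝ᵥ z.2 = 0 := by linarith
      have hz0 : z = 0 := by
        have e1 := dotProduct_self_eq_zero.mp hz1
        have e2 := dotProduct_self_eq_zero.mp hz2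
        exact Prod.ext e1 e2
      rw [hz0, map_zero]
      simp
  -- the two blocks of M
  set A : Matrix (Fin n) (Fin n ⊕ Fin n) ℝ := M.submatrix Sum.inl id with hA
  set A' : Matrix (Fin n) (Fin n ⊕ Fin n) ℝ := M.submatrix Sum.inr id with hA'
  have hAval : ∀ w : Fin n ⊕ Fin n → ℝ,
      (A *ᵥ w) ⬝ᵥ (A *ᵥ w) ≤ w ⬝ᵥ w ∧ (A' *ᵥ w) ⬝ᵥ (A' *ᵥ w) ≤ w ⬝ᵥ w := by
    intro w
    set z : (Fin n → ℝ) × (Fin n → ℝ) :=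
      (fun i => w (Sum.inl i), fun i => w (Sum.inr i)) with hz
    have hwz : Sum.elim z.1 z.2 = w := by
      funext j; cases j <;> rfl
    have hblock1 : A *ᵥ w = (f z).1 := by
      funext i
      have hcong := congrFun (hMv z) (Sum.inl i)
      rw [hwz] at hcong
      exact hcong
    have hblock2 : A' *ᵥ w = (f z).2 := by
      funext i
      have hcong := congrFun (hMv z) (Sum.inr i)
      rw [hwz] at hcong
      exact hcong
    have hwq : w ⬝ᵥ w = z.1 ⬝ᵥ z.1 + z.2 ⬝ᵥ z.2 := by
      rw [← hwz, my_sum_elim_dotProduct]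
    rw [hblock1, hblock2, hwq]
    exact hscale z
  -- operator norm bound transfers to the transpose
  have htrans : ∀ (C : Matrix (Fin n) (Fin n ⊕ Fin n) ℝ)
      (hC : ∀ w, (C *ᵥ w) ⬝ᵥ (C *ᵥ w) ≤ w ⬝ᵥ w) (x : Fin n → ℝ),
      (Cᵀ *ᵥ x) ⬝ᵥ (Cᵀ *ᵥ x) ≤ x ⬝ᵥ x := by
    intro C hC x
    have key : x ⬝ᵥ (C *ᵥ (Cᵀ *ᵥ x)) = (Cᵀ *ᵥ x) ⬝ᵥ (Cᵀ *ᵥ x) := by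
      rw [Matrix.dotProduct_mulVec x C (Cᵀ *ᵥ x)]
      congr 1
      exact (Matrix.mulVec_transpose C x).symm
    have hcs := my_cauchy x (C *ᵥ (Cᵀ *ᵥ x))
    have h2 := hC (Cᵀ *ᵥ x)
    have h3 := my_dotProduct_self_nonneg (Cᵀ *ᵥ x)
    have h4 := my_dotProduct_self_nonneg x
    rcases h3.lt_or_eq with h5 | h5
    · nlinarith
    · rw [← h5]; exact h4
  -- positive semidefiniteness of the block conditions
  have hblockpsd : ∀ (C : Matrix (Fin n) (Fin n ⊕ Fin n) ℝ)
      (hC : ∀ w, (C *ᵥ w) ⬝ᵥ (C *ᵥ w) ≤ w ⬝ᵥ w),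
      (1 - C * Cᵀ).PosSemidef := by
    intro C hC
    rw [Matrix.posSemidef_iff_dotProduct_mulVec]
    constructor
    · refine Matrix.IsHermitian.sub Matrix.isHermitian_one ?_
      have := Matrix.isHermitian_mul_conjTranspose_self C
      rwa [Matrix.conjTranspose_eq_transpose_of_trivial] at this
    · intro x
      rw [sub_mulVec, dotProduct_sub, one_mulVec, star_trivial]
      have hrw : x ⬝ᵥ (C * Cᵀ) *ᵥ x = (Cᵀ *ᵥ x) ⬝ᵥ (Cᵀ *ᵥ x) := by
        rw [← Matrix.mulVec_mulVec, Matrix.dotProduct_mulVec x C (Cᵀ *ᵥ x)]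
        congr 1
        exact (Matrix.mulVec_transpose C x).symm
      rw [hrw]
      have := htrans C hC x
      linarith
  have hb1 : (M * Mᵀ).toBlocks₁₁ = A * Aᵀ := by
    ext i j
    simp [Matrix.toBlocks₁₁, Matrix.mul_apply, hA, Matrix.submatrix, Matrix.transpose_apply]
  have hb2 : (M * Mᵀ).toBlocks₂₂ = A' * A'ᵀ := by
    ext i j
    simp [Matrix.toBlocks₂₂, Matrix.mul_apply, hA', Matrix.submatrix, Matrix.transpose_apply]
  have hP : (1 - (M * Mᵀ).toBlocks₁₁).PosSemidef := by
    rw [hb1]; exact hblockpsd A (fun w => (hAval w).1)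
  have hR : (1 - (M * Mᵀ).toBlocks₂₂).PosSemidef := by
    rw [hb2]; exact hblockpsd A' (fun w => (hAval w).2)
  obtain ⟨hle, heqcase⟩ := my_core M hdet0 hP hR
  -- volume of the image
  have hvol : volume ((fun z => c + f z) '' Bs) = ENNReal.ofReal |M.det| * volume Bs := by
    have h1 : (fun z => c + f z) '' Bs = (fun w => c + w) '' (f.toLinearMap '' Bs) := by
      rw [← Set.image_comp]
      rfl
    rw [h1, Set.image_add_left, measure_preimage_add,
      Measure.addHaar_image_linearMap volume f.toLinearMap Bs,
      hM, LinearMap.det_toMatrix]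
  -- volume of the unit ball : finite and positive
  have hfin : volume Bs ≠ ⊤ := by
    have hsub : Bs ⊆ Metric.closedBall 0 1 := by
      intro z hz
      simp only [hBs, Set.mem_setOf_eq] at hz
      have h1 := my_dotProduct_self_nonneg z.1
      have h2 := my_dotProduct_self_nonneg z.2
      rw [Metric.mem_closedBall, dist_zero_right]
      rw [Prod.norm_def, max_le_iff]
      constructor
      · rw [pi_norm_le_iff_of_nonneg zero_le_one]
        intro i
        rw [Real.norm_eq_abs, abs_le_one_iff_mul_self_le_one]
        calc z.1 i * z.1 i ≤ z.1 ⬝ᵥ z.1 :=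
              Finset.single_le_sum (fun j _ => mul_self_nonneg (z.1 j)) (Finset.mem_univ i)
          _ ≤ 1 := by linarith
      · rw [pi_norm_le_iff_of_nonneg zero_le_one]
        intro i
        rw [Real.norm_eq_abs, abs_le_one_iff_mul_self_le_one]
        calc z.2 i * z.2 i ≤ z.2 ⬝ᵥ z.2 :=
              Finset.single_le_sum (fun j _ => mul_self_nonneg (z.2 j)) (Finset.mem_univ i)
          _ ≤ 1 := by linarith
    exact ((measure_mono hsub).trans_lt measure_closedBall_lt_top).ne
  have hpos : volume Bs ≠ 0 := by
    have hr : (0 : ℝ) < ((n : ℝ) + 1)⁻¹ := by positivity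
    have hsub : Metric.ball (0 : (Fin n → ℝ) × (Fin n → ℝ)) (((n : ℝ) + 1)⁻¹) ⊆ Bs := by
      intro z hz
      rw [Metric.mem_ball, dist_zero_right, Prod.norm_def, max_lt_iff] at hz
      simp only [hBs, Set.mem_setOf_eq]
      have hbound : ∀ (x : Fin n → ℝ), ‖x‖ < ((n : ℝ) + 1)⁻¹ →
          x ⬝ᵥ x ≤ n * (((n : ℝ) + 1)⁻¹ * ((n : ℝ) + 1)⁻¹) := by
        intro x hx
        calc x ⬝ᵥ x = ∑ i, x i * x i := rfl
          _ ≤ ∑ _i : Fin n, ((n : ℝ) + 1)⁻¹ * ((n : ℝ) + 1)⁻¹ := by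
              refine Finset.sum_le_sum fun i _ => ?_
              have hxi : |x i| ≤ ((n : ℝ) + 1)⁻¹ := by
                calc |x i| = ‖x i‖ := rfl
                  _ ≤ ‖x‖ := norm_le_pi_norm x i
                  _ ≤ ((n : ℝ) + 1)⁻¹ := hx.le
              calc x i * x i = |x i| * |x i| := (abs_mul_abs_self _).symm
                _ ≤ ((n : ℝ) + 1)⁻¹ * ((n : ℝ) + 1)⁻¹ :=
                    mul_le_mul hxi hxi (abs_nonneg _) hr.le
          _ = n * (((n : ℝ) + 1)⁻¹ * ((n : ℝ) + 1)⁻¹) := by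
              rw [Finset.sum_const, Finset.card_univ, Fintype.card_fin, nsmul_eq_mul]
      have hc1 := hbound z.1 hz.1
      have hc2 := hbound z.2 hz.2
      have hn : (0 : ℝ) ≤ n := Nat.cast_nonneg n
      have hineq : (n : ℝ) * (((n : ℝ) + 1)⁻¹ * ((n : ℝ) + 1)⁻¹) +
          (n : ℝ) * (((n : ℝ) + 1)⁻¹ * ((n : ℝ) + 1)⁻¹) ≤ 1 := by
        have hne : ((n : ℝ) + 1) ≠ 0 := by positivity
        have he : (n : ℝ) * (((n : ℝ) + 1)⁻¹ * ((n : ℝ) + 1)⁻¹) = n / (((n : ℝ) + 1) ^ 2) := by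
          rw [div_eq_mul_inv, pow_two, mul_inv]
        rw [he, ← add_div, div_le_one (by positivity)]
        have hn : (0 : ℝ) ≤ n := Nat.cast_nonneg n
        nlinarith
      linarith
    intro hc
    have hba := Metric.measure_ball_pos volume (0 : (Fin n → ℝ) × (Fin n → ℝ)) hr
    exact absurd (le_antisymm ((measure_mono hsub).trans hc.le) zero_le) hba.ne'
  constructor
  · rw [hvol]
    calc ENNReal.ofReal |M.det| * volume Bs ≤ 1 * volume Bs := by
          refine mul_le_mul_left ?_ _
          rw [ENNReal.ofReal_le_one]
          rw [abs_le_one_iff_mul_self_le_one]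
          nlinarith
      _ = volume Bs := one_mul _
  · intro hveq
    rw [hvol] at hveq
    have h1 : ENNReal.ofReal |M.det| = 1 := by
      refine (ENNReal.mul_left_inj hpos hfin).mp ?_
      rw [hveq, one_mul]
    have habs : |M.det| = 1 := ENNReal.ofReal_eq_one.mp h1
    have hd2 : M.det ^ 2 = 1 := by rw [← sq_abs, habs, one_pow]
    have hMtM := heqcase hd2
    have hqpres : ∀ z : (Fin n → ℝ) × (Fin n → ℝ),
        (f z).1 ⬝ᵥ (f z).1 + (f z).2 ⬝ᵥ (f z).2 = z.1 ⬝ᵥ z.1 + z.2 ⬝ᵥ z.2 := by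
      intro z
      rw [← my_sum_elim_dotProduct (f z).1 (f z).1 (f z).2 (f z).2,
        ← my_sum_elim_dotProduct z.1 z.1 z.2 z.2, ← hMv z]
      rw [Matrix.dotProduct_mulVec (M *ᵥ Sum.elim z.1 z.2) M (Sum.elim z.1 z.2)]
      have hvm : (M *ᵥ Sum.elim z.1 z.2) ᵥ* M = (Mᵀ * M) *ᵥ Sum.elim z.1 z.2 := by
        rw [← Matrix.mulVec_transpose M (M *ᵥ Sum.elim z.1 z.2), Matrix.mulVec_mulVec]
      rw [hvm, hMtM, Matrix.one_mulVec]
    have hfB : (⇑f) '' Bs = Bs := by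
      ext w
      constructor
      · rintro ⟨z, hzB, rfl⟩
        simp only [hBs, Set.mem_setOf_eq] at hzB ⊢
        rw [hqpres z]
        exact hzB
      · intro hw
        refine ⟨f.symm w, ?_, f.apply_symm_apply w⟩
        simp only [hBs, Set.mem_setOf_eq] at hw ⊢
        have h2 := hqpres (f.symm w)
        rw [f.apply_symm_apply] at h2
        rw [← h2]
        exact hw
    have hcB : ∀ w, w ∈ Bs → (c + w).1 ⬝ᵥ (c + w).1 ≤ 1 ∧ (c + w).2 ⬝ᵥ (c + w).2 ≤ 1 := by
      intro w hw
      rw [← hfB] at hw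
      obtain ⟨z, hz, rfl⟩ := hw
      have := himg (Set.mem_image_of_mem _ hz)
      simpa only [Set.mem_setOf_eq] using this
    have hc1 : c.1 = 0 := by
      refine my_center_zero c.1 fun u hu => ?_
      have hmem : ((u, (0 : Fin n → ℝ)) : (Fin n → ℝ) × (Fin n → ℝ)) ∈ Bs := by
        simp only [hBs, Set.mem_setOf_eq]
        simpa [zero_dotProduct] using hu
      have := (hcB _ hmem).1
      simpa [add_comm] using this
    have hc2 : c.2 = 0 := by
      refine my_center_zero c.2 fun u hu => ?_
      have hmem : (((0 : Fin n → ℝ), u) : (Fin n → ℝ) × (Fin n → ℝ)) ∈ Bs := by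
        simp only [hBs, Set.mem_setOf_eq]
        simpa [zero_dotProduct] using hu
      have := (hcB _ hmem).2
      simpa [add_comm] using this
    have hc0 : c = 0 := Prod.ext hc1 hc2
    have himg0 : (fun z => c + f z) '' Bs = (⇑f) '' Bs := by
      rw [hc0]
      simp only [zero_add]
    rw [himg0, hfB]
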